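/- Let J be a right ℍ-linear map of ℍ^{n+1} satisfying J² = −Id that preserves the quaternionic Hermitian form h_ℍ (i.e., h_ℍ(JX, JY) = h_ℍ(X,Y) for all X, Y). Write h_ℍ = h_ℂ + j·a_ℂ under the identification ℍ^{n+1} ≅ ℂ^{2n+2}. Then the i-eigenspace V and the (−i)-eigenspace V·j of J are orthogonal with respect to h_ℂ and each is isotropic with respect to the complex symplectic form a_ℂ. -/

import Mathlib

/-- Right multiplication of a vector of `ℍ^{n+1}` by a quaternion. -/
noncomputable def rmul {n : ℕ} (x : Fin (n + 1) → Quaternion ℝ) (q : Quaternion ℝ) :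
    Fin (n + 1) → Quaternion ℝ := fun l => x l * q

/-- The quaternion `i`. -/
noncomputable def iq : Quaternion ℝ := ⟨0, 1, 0, 0⟩

/-- The quaternion `j`. -/
noncomputable def jq : Quaternion ℝ := ⟨0, 0, 1, 0⟩

/-- The quaternionic Hermitian form of signature `(n,1)`:
`h_ℍ(X,Y) = Σ_{l<n} conj(x_l)·y_l − conj(x_{n+1})·y_{n+1}`. -/
noncomputable def hH (n : ℕ) (X Y : Fin (n + 1) → Quaternion ℝ) : Quaternion ℝ :=
  ∑ l : Fin (n + 1), if (l : ℕ) < n then star (X l) * Y l else -(star (X l) * Y l)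

/-- The first complex component in the decomposition `q = c1 q + j·(c2 q)` of a quaternion,
so that `h_ℍ = h_ℂ + j·a_ℂ` with `h_ℂ = c1 ∘ h_ℍ` and `a_ℂ = c2 ∘ h_ℍ`. -/
noncomputable def c1 (q : Quaternion ℝ) : ℂ := ⟨q.re, q.imI⟩

/-- The second complex component in the decomposition `q = c1 q + j·(c2 q)` of a quaternion. -/
noncomputable def c2 (q : Quaternion ℝ) : ℂ := ⟨q.imJ, -q.imK⟩

lemma rmul_rmul {n : ℕ} (x : Fin (n+1) → Quaternion ℝ) (p q : Quaternion ℝ) :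
    rmul (rmul x p) q = rmul x (p * q) := by
  funext l; simp [rmul, mul_assoc]

lemma hH_rmul (n : ℕ) (X Y : Fin (n+1) → Quaternion ℝ) (p q : Quaternion ℝ) :
    hH n (rmul X p) (rmul Y q) = star p * hH n X Y * q := by
  unfold hH rmul
  rw [Finset.mul_sum, Finset.sum_mul]
  apply Finset.sum_congr rfl
  intro l _
  split_ifs <;> simp only [star_mul] <;> noncomm_ring

lemma iq_re : iq.re = 0 := rfl
lemma iq_imI : iq.imI = 1 := rfl
lemma iq_imJ : iq.imJ = 0 := rfl
lemma iq_imK : iq.imK = 0 := rfl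
lemma jq_re : jq.re = 0 := rfl
lemma jq_imI : jq.imI = 0 := rfl
lemma jq_imJ : jq.imJ = 1 := rfl
lemma jq_imK : jq.imK = 0 := rfl

lemma quatA (a : Quaternion ℝ) (h : star iq * a * iq = a) : a.imJ = 0 ∧ a.imK = 0 := by
  rw [Quaternion.ext_iff] at h
  simp [iq_re, iq_imI, iq_imJ, iq_imK, Quaternion.re_mul, Quaternion.imI_mul, Quaternion.imJ_mul, Quaternion.imK_mul] at h
  constructor <;> linarith [h.1, h.2]

lemma quatB (b : Quaternion ℝ) (h : star iq * b * (-iq) = b) : b.re = 0 ∧ b.imI = 0 := by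
  rw [Quaternion.ext_iff] at h
  simp [iq_re, iq_imI, iq_imJ, iq_imK, Quaternion.re_mul, Quaternion.imI_mul, Quaternion.imJ_mul, Quaternion.imK_mul] at h
  constructor <;> linarith [h.1, h.2]

lemma quatC (a : Quaternion ℝ) (hJ : a.imJ = 0) (hK : a.imK = 0) :
    (star jq * a * jq).imJ = 0 ∧ (star jq * a * jq).imK = 0 := by
  simp [jq_re, jq_imI, jq_imJ, jq_imK, Quaternion.re_mul, Quaternion.imI_mul, Quaternion.imJ_mul, Quaternion.imK_mul, hJ, hK]

lemma quatD : iq * jq = jq * (-iq) := by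
  ext <;> simp [iq_re, iq_imI, iq_imJ, iq_imK, jq_re, jq_imI, jq_imJ, jq_imK, Quaternion.re_mul, Quaternion.imI_mul, Quaternion.imJ_mul,
    Quaternion.imK_mul]

/-- If `J` is a right `ℍ`-linear complex structure preserving the quaternionic Hermitian form
`h_ℍ = h_ℂ + j·a_ℂ`, then the `i`-eigenspace `V` and the `(−i)`-eigenspace `V·j` of `J`
are `h_ℂ`-orthogonal, and each is isotropic for the complex symplectic form `a_ℂ`. -/
theorem eigenspaces_orthogonal_and_isotropic (n : ℕ)
    (J : (Fin (n + 1) → Quaternion ℝ) → (Fin (n + 1) → Quaternion ℝ))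
    (hadd : ∀ x y, J (x + y) = J x + J y)
    (hlin : ∀ x q, J (rmul x q) = rmul (J x) q)
    (hsq : ∀ x, J (J x) = -x)
    (hpres : ∀ x y, hH n (J x) (J y) = hH n x y) :
    ∀ v w, J v = rmul v iq → J w = rmul w iq →
      c1 (hH n v (rmul w jq)) = 0 ∧
      c2 (hH n v w) = 0 ∧
      c2 (hH n (rmul v jq) (rmul w jq)) = 0 := by
  intro v w hv hw
  have hvj : J (rmul w jq) = rmul (rmul w jq) (-iq) := by
    rw [hlin, hw, rmul_rmul, rmul_rmul, quatD]
  have e1 : star iq * hH n v (rmul w jq) * (-iq) = hH n v (rmul w jq) := by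
    have h := hpres v (rmul w jq)
    rwa [hv, hvj, hH_rmul] at h
  have e2 : star iq * hH n v w * iq = hH n v w := by
    have h := hpres v w
    rwa [hv, hw, hH_rmul] at h
  obtain ⟨b1, b2⟩ := quatB _ e1
  obtain ⟨a1, a2⟩ := quatA _ e2
  have e3 : hH n (rmul v jq) (rmul w jq) = star jq * hH n v w * jq := hH_rmul ..
  obtain ⟨c3, c4⟩ := quatC (hH n v w) a1 a2
  refine ⟨?_, ?_, ?_⟩
  · simp [c1, Complex.ext_iff, b1, b2]
  · simp [c2, Complex.ext_iff, a1, a2]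
  · rw [e3]; simp [c2, Complex.ext_iff, c3, c4]
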